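/- Let σ_1 ≥ σ_2 ≥ ⋯ ≥ σ_d > 0 and let μ = μ¹⊗⋯⊗μ^d be a product probability measure on ℝ^d with supp μ^j ⊆ [a_j, b_j] and σ_j = b_j - a_j. Given ε > 0, let k̄ be the smallest natural number with Σ_{k=k̄+1}^d σ_k ≤ ε/2, and let 𝒩 ∈ ℕ satisfy (1/𝒩)Σ_{k=1}^{k̄} σ_k ≤ ε/2. Then there exists an atomic probability measure μ^N supported on N = 𝒩^{k̄} points with W₁(μ, μ^N) ≤ ε. -/

import Mathlib

open MeasureTheory Set

noncomputable section

namespace W1Aux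

def qidx (q : ℕ → ℝ) (N : ℕ) (t : ℝ) : ℕ :=
  ((Finset.range N).filter (fun i => q i < t)).sup id

variable {q : ℕ → ℝ} {N : ℕ} {t : ℝ}

lemma qidx_lt (hN : 0 < N) : qidx q N t < N := by
  refine (Finset.sup_lt_iff (by simpa using hN)).2 ?_
  intro i hi
  exact Finset.mem_range.1 (Finset.mem_filter.1 hi).1

lemma le_qidx_iff (hmono : Monotone q) {i : ℕ} (hi : 0 < i) :
    i ≤ qidx q N t ↔ i < N ∧ q i < t := by
  constructor
  · intro h
    have hne : (((Finset.range N).filter (fun i => q i < t))).Nonempty := by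
      by_contra hc
      rw [Finset.not_nonempty_iff_eq_empty] at hc
      simp [qidx, hc] at h
      omega
    obtain ⟨m, hm, hsup⟩ := Finset.exists_mem_eq_sup _ hne id
    rw [qidx, hsup] at h
    simp only [Finset.mem_filter, Finset.mem_range] at hm
    exact ⟨lt_of_le_of_lt h hm.1, lt_of_le_of_lt (hmono h) hm.2⟩
  · rintro ⟨h1, h2⟩
    exact Finset.le_sup (f := id) (Finset.mem_filter.2 ⟨Finset.mem_range.2 h1, h2⟩)

lemma q_qidx_le (hmono : Monotone q) (ht : q 0 ≤ t) : q (qidx q N t) ≤ t := by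
  rcases Nat.eq_zero_or_pos (qidx q N t) with h | h
  · rw [h]; exact ht
  · exact le_of_lt ((le_qidx_iff hmono h).1 le_rfl).2

lemma le_q_qidx_succ (hmono : Monotone q) (hN : 0 < N) (ht : t ≤ q N) :
    t ≤ q (qidx q N t + 1) := by
  by_contra hc
  push_neg at hc
  rcases lt_or_ge (qidx q N t + 1) N with h | h
  · have := (le_qidx_iff hmono (Nat.succ_pos _)).2 ⟨h, hc⟩
    omega
  · have h2 : qidx q N t + 1 = N := by have := qidx_lt (q := q) (t := t) hN; omega
    rw [h2] at hc
    exact absurd ht (not_le.2 hc)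

def qcell (q : ℕ → ℝ) (N : ℕ) (i : ℕ) : Set ℝ := {t | qidx q N t = i}

lemma mem_qcell_qidx : t ∈ qcell q N (qidx q N t) := rfl

lemma setGe_eq (hmono : Monotone q) {i : ℕ} (hi : 0 < i) (hiN : i ≤ N) :
    {t | i ≤ qidx q N t} = if i = N then (∅ : Set ℝ) else Ioi (q i) := by
  ext t
  rw [mem_setOf_eq, le_qidx_iff hmono hi]
  split <;> rename_i h
  · simp [h]
  · have : i < N := lt_of_le_of_ne hiN h
    simp [this]

lemma measurableSet_setGe (hmono : Monotone q) {i : ℕ} (hiN : i ≤ N) :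
    MeasurableSet {t | i ≤ qidx q N t} := by
  rcases Nat.eq_zero_or_pos i with h | h
  · simp [h]
  · rw [setGe_eq hmono h hiN]
    split <;> measurability

lemma qcell_eq_diff (i : ℕ) :
    qcell q N i = {t | i ≤ qidx q N t} \ {t | i + 1 ≤ qidx q N t} := by
  ext t
  simp only [qcell, mem_setOf_eq, mem_diff, not_le]
  omega

lemma measurableSet_qcell (hmono : Monotone q) {i : ℕ} (hi : i < N) :
    MeasurableSet (qcell q N i) := by
  rw [qcell_eq_diff]
  exact (measurableSet_setGe hmono (le_of_lt hi)).diff (measurableSet_setGe hmono hi)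

variable (ν : Measure ℝ) [IsProbabilityMeasure ν]

lemma meas_setGe (hmono : Monotone q) (hN : 0 < N)
    (hq : ∀ i ≤ N, (ν (Iic (q i))).toReal = i / N) {i : ℕ} (hiN : i ≤ N) :
    (ν {t | i ≤ qidx q N t}).toReal = 1 - i / N := by
  rcases Nat.eq_zero_or_pos i with h | h
  · subst h
    simp [show {t : ℝ | 0 ≤ qidx q N t} = univ from eq_univ_of_forall (fun t => Nat.zero_le _)]
  · rw [setGe_eq hmono h hiN]
    split <;> rename_i hcase
    · subst hcase
      simp [div_self (show (i : ℝ) ≠ 0 from Nat.cast_ne_zero.2 (by omega))]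
    · have : Ioi (q i) = (Iic (q i))ᶜ := by simp
      rw [this, measure_compl measurableSet_Iic (measure_ne_top _ _),
        ENNReal.toReal_sub_of_le (by simpa using prob_le_one (μ := ν) (s := Iic (q i)))
          (by simp), hq i hiN]
      simp

lemma meas_qcell (hmono : Monotone q) (hN : 0 < N)
    (hq : ∀ i ≤ N, (ν (Iic (q i))).toReal = i / N) {i : ℕ} (hi : i < N) :
    (ν (qcell q N i)).toReal = 1 / N := by
  have hsub : {t | i + 1 ≤ qidx q N t} ⊆ {t | i ≤ qidx q N t} := fun t ht => by
    simp only [mem_setOf_eq] at *; omega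
  rw [qcell_eq_diff,
    measure_diff hsub (measurableSet_setGe hmono hi).nullMeasurableSet (measure_ne_top _ _),
    ENNReal.toReal_sub_of_le (measure_mono hsub) (measure_ne_top _ _),
    meas_setGe ν hmono hN hq (le_of_lt hi), meas_setGe ν hmono hN hq hi]
  have h0 : (N : ℝ) ≠ 0 := by positivity
  push_cast
  field_simp
  ring

/-- marginal of a pi (probability) measure -/
lemma pi_preimage_eval {d : ℕ} (μ : Fin d → Measure ℝ) [∀ j, IsProbabilityMeasure (μ j)]
    (j : Fin d) (s : Set ℝ) : Measure.pi μ (Function.eval j ⁻¹' s) = μ j s := by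
  have : Function.eval j ⁻¹' s = Set.pi univ (fun i => if i = j then s else univ) := by
    ext x
    simp only [mem_preimage, mem_pi, mem_univ, forall_true_left]
    constructor
    · intro h i; split <;> rename_i hh
      · subst hh; exact h
      · trivial
    · intro h; simpa using h j
  rw [this, Measure.pi_pi]
  rw [Finset.prod_eq_single j]
  · simp
  · intro i _ hij; simp [hij]
  · simp

/-- ℓ² norm bounded by ℓ¹ norm -/
lemma norm_toEuc_le {d : ℕ} (v : Fin d → ℝ) :
    ‖(EuclideanSpace.equiv (Fin d) ℝ).symm v‖ ≤ ∑ j, |v j| := by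
  rw [EuclideanSpace.norm_eq]
  simp only [PiLp.toLp_apply, Real.norm_eq_abs]
  rw [show ∑ j, |v j| = Real.sqrt ((∑ j, |v j|) ^ 2) from (Real.sqrt_sq (by positivity)).symm]
  exact Real.sqrt_le_sqrt (Finset.sum_sq_le_sq_sum_of_nonneg (fun i _ => abs_nonneg _))

end W1Aux

/-- The Monge–Kantorovich–Rubinstein (Wasserstein-1) distance, via its dual
(Lipschitz) formulation. -/
def W1 {E : Type*} [MeasurableSpace E] [PseudoMetricSpace E]
    (μ ν : Measure E) : ℝ :=
  sSup { r | ∃ ξ : E → ℝ, LipschitzWith 1 ξ ∧ r = |∫ z, ξ z ∂μ - ∫ z, ξ z ∂ν| }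

theorem stmt_13 {d : ℕ}
    (μ : Fin d → Measure ℝ) [∀ j, IsProbabilityMeasure (μ j)]
    (a b : Fin d → ℝ)
    (hsupp : ∀ j, (μ j) (Icc (a j) (b j))ᶜ = 0)
    (σ : Fin d → ℝ) (hσdef : ∀ j, σ j = b j - a j)
    (hσpos : ∀ j, 0 < σ j)
    (hσmono : ∀ j l : Fin d, j ≤ l → σ l ≤ σ j)
    (hcdf : ∀ j, Continuous fun t => ((μ j) (Iic t)).toReal)
    (ε : ℝ) (hε : 0 < ε)
    (kbar : ℕ) (hkbar : kbar ≤ d)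
    -- kbar is the smallest natural number such that the tail sum is at most ε/2
    (htail : ∑ j ∈ Finset.univ.filter (fun j : Fin d => kbar ≤ (j : ℕ)), σ j ≤ ε / 2)
    (hmin : ∀ m < kbar, ¬ (∑ j ∈ Finset.univ.filter (fun j : Fin d => m ≤ (j : ℕ)), σ j ≤ ε / 2))
    (𝒩 : ℕ) (h𝒩pos : 0 < 𝒩)
    (h𝒩 : (1 / (𝒩 : ℝ)) * ∑ j ∈ Finset.univ.filter (fun j : Fin d => (j : ℕ) < kbar), σ j ≤ ε / 2) :
    ∃ pts : Fin (𝒩 ^ kbar) → EuclideanSpace ℝ (Fin d),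
      W1 ((Measure.pi μ : Measure (Fin d → ℝ)).map (EuclideanSpace.equiv (Fin d) ℝ).symm)
        (((𝒩 : ENNReal) ^ kbar)⁻¹ • ∑ i, Measure.dirac (pts i)) ≤ ε := by
  classical
  have hab : ∀ j, a j < b j := fun j => by have := hσpos j; rw [hσdef j] at this; linarith
  set F : Fin d → ℝ → ℝ := fun j t => ((μ j) (Iic t)).toReal with hF
  have hFmono : ∀ j, Monotone (F j) := fun j s t hst =>
    ENNReal.toReal_mono (measure_ne_top _ _) (measure_mono (Iic_subset_Iic.2 hst))
  have hFzero : ∀ j, ∀ t < a j, F j t = 0 := by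
    intro j t ht
    have h0 : (μ j) (Iic t) = 0 := by
      refine measure_mono_null (fun x hx => ?_) (hsupp j)
      simp only [mem_Iic] at hx
      simp only [mem_compl_iff, mem_Icc, not_and_or, not_le]
      exact Or.inl (lt_of_le_of_lt hx ht)
    simp [hF, h0]
  have hFa : ∀ j, F j (a j) = 0 := by
    intro j
    have h1 : Filter.Tendsto (F j) (nhdsWithin (a j) (Iio (a j))) (nhds (F j (a j))) :=
      ((hcdf j).tendsto _).mono_left nhdsWithin_le_nhds
    have h2 : Filter.Tendsto (F j) (nhdsWithin (a j) (Iio (a j))) (nhds 0) := by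
      apply Filter.Tendsto.congr' _ tendsto_const_nhds
      filter_upwards [self_mem_nhdsWithin] with t ht
      exact (hFzero j t ht).symm
    exact tendsto_nhds_unique h1 h2
  have hFb : ∀ j, F j (b j) = 1 := by
    intro j
    have h0 : (μ j) (Iic (b j))ᶜ = 0 := by
      refine measure_mono_null (fun x hx => ?_) (hsupp j)
      simp only [compl_Iic, mem_Ioi] at hx
      simp only [mem_compl_iff, mem_Icc, not_and_or, not_le]
      exact Or.inr hx
    have h1 := measure_add_measure_compl (μ := μ j) (measurableSet_Iic (a := b j))
    rw [h0, add_zero, measure_univ] at h1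
    simp [hF, h1]
  set N : Fin d → ℕ := fun j => if (j : ℕ) < kbar then 𝒩 else 1 with hNdef
  have hN1 : ∀ j, 0 < N j := by
    intro j; rw [hNdef]; dsimp only; split
    · exact h𝒩pos
    · exact one_pos
  -- quantile points
  have hivt : ∀ (j : Fin d) (i : ℕ), ∃ t, t ∈ Icc (a j) (b j) ∧
      F j t = (min i (N j) : ℕ) / (N j : ℝ) := by
    intro j i
    have hmem : ((min i (N j) : ℕ) : ℝ) / (N j : ℝ) ∈ Icc (F j (a j)) (F j (b j)) := by
      rw [hFa j, hFb j]
      constructor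
      · positivity
      · rw [div_le_one (by exact_mod_cast hN1 j)]
        exact_mod_cast Nat.min_le_right i (N j)
    obtain ⟨t, ht, hFt⟩ := intermediate_value_Icc (le_of_lt (hab j)) ((hcdf j).continuousOn) hmem
    exact ⟨t, ht, hFt⟩
  choose g hg1 hg2 using hivt
  set q : Fin d → ℕ → ℝ :=
    fun j i => if i = 0 then a j else if N j ≤ i then b j else g j i with hqdef
  have hq0 : ∀ j, q j 0 = a j := fun j => by simp [hqdef]
  have hqN : ∀ j, q j (N j) = b j := by
    intro j
    have := hN1 j
    rw [hqdef]; dsimp only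
    rw [if_neg (by omega), if_pos le_rfl]
  have hqF : ∀ j, ∀ i ≤ N j, F j (q j i) = (i : ℝ) / (N j : ℝ) := by
    intro j i hi
    rw [hqdef]; dsimp only
    split <;> rename_i hc0
    · subst hc0; simp [hFa j]
    · split <;> rename_i hcN
      · have hiN : i = N j := le_antisymm hi hcN
        subst hiN
        rw [hFb j, div_self (by exact_mod_cast (hN1 j).ne')]
      · rw [hg2 j i, Nat.min_eq_left hi]
  have hqmono : ∀ j, Monotone (q j) := by
    intro j
    apply monotone_nat_of_le_succ
    intro i
    rcases le_or_gt (N j) i with h | h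
    · have hi0 : i ≠ 0 := by have := hN1 j; omega
      have h1 : q j i = b j := by
        rw [hqdef]; dsimp only; rw [if_neg hi0, if_pos h]
      have h2 : q j (i + 1) = b j := by
        rw [hqdef]; dsimp only; rw [if_neg (by omega), if_pos (by omega)]
      rw [h1, h2]
    · have hFi : F j (q j i) = (i : ℝ) / (N j : ℝ) := hqF j i (le_of_lt h)
      have hFi1 : F j (q j (i + 1)) = ((i : ℝ) + 1) / (N j : ℝ) := by
        rw [hqF j (i + 1) h]; push_cast; ring_nf
      by_contra hc
      push_neg at hc
      have hmono := hFmono j (le_of_lt hc)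
      rw [hFi, hFi1] at hmono
      have hNpos : (0 : ℝ) < (N j : ℝ) := by exact_mod_cast hN1 j
      rw [div_le_div_iff_of_pos_right hNpos] at hmono
      linarith
  have hqmemIcc : ∀ j i, q j i ∈ Icc (a j) (b j) := by
    intro j i
    rw [hqdef]; dsimp only
    split
    · exact ⟨le_rfl, le_of_lt (hab j)⟩
    · split
      · exact ⟨le_of_lt (hab j), le_rfl⟩
      · exact hg1 j i
  have hIic : ∀ j, ∀ i ≤ N j, ((μ j) (Iic (q j i))).toReal = (i : ℝ) / (N j : ℝ) :=
    fun j i hi => hqF j i hi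
  -- counting
  have hcard : (Finset.univ.filter (fun j : Fin d => (j : ℕ) < kbar)).card = kbar := by
    have himg : Finset.univ.filter (fun j : Fin d => (j : ℕ) < kbar)
        = Finset.image (Fin.castLE hkbar) Finset.univ := by
      ext j
      simp only [Finset.mem_filter, Finset.mem_univ, true_and, Finset.mem_image]
      constructor
      · intro h; exact ⟨⟨(j : ℕ), h⟩, by ext; simp⟩
      · rintro ⟨k, rfl⟩; simpa using k.2
    rw [himg, Finset.card_image_of_injective _ (Fin.castLE_injective hkbar),
      Finset.card_univ, Fintype.card_fin]
  have hprodN : ∏ j, ((N j : ℝ))⁻¹ = ((𝒩 : ℝ) ^ kbar)⁻¹ := by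
    rw [← Finset.prod_filter_mul_prod_filter_not Finset.univ (fun j : Fin d => (j : ℕ) < kbar)]
    have h1 : ∏ j ∈ Finset.univ.filter (fun j : Fin d => (j : ℕ) < kbar), ((N j : ℝ))⁻¹
        = ((𝒩 : ℝ)⁻¹) ^ kbar := by
      rw [Finset.prod_congr rfl (fun j hj => ?_), Finset.prod_const, hcard]
      rw [hNdef]; dsimp only
      rw [if_pos (Finset.mem_filter.1 hj).2]
    have h2 : ∏ j ∈ Finset.univ.filter (fun j : Fin d => ¬ (j : ℕ) < kbar), ((N j : ℝ))⁻¹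
        = 1 := by
      refine Finset.prod_eq_one (fun j hj => ?_)
      rw [hNdef]; dsimp only
      rw [if_neg (Finset.mem_filter.1 hj).2]
      norm_num
    rw [h1, h2, mul_one, inv_pow]
  have hcardI : Fintype.card (∀ j, Fin (N j)) = 𝒩 ^ kbar := by
    rw [Fintype.card_pi]
    simp only [Fintype.card_fin]
    rw [← Finset.prod_filter_mul_prod_filter_not Finset.univ (fun j : Fin d => (j : ℕ) < kbar)]
    have h1 : ∏ j ∈ Finset.univ.filter (fun j : Fin d => (j : ℕ) < kbar), N j = 𝒩 ^ kbar := by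
      rw [Finset.prod_congr rfl (fun j hj => ?_), Finset.prod_const, hcard]
      rw [hNdef]; dsimp only
      rw [if_pos (Finset.mem_filter.1 hj).2]
    have h2 : ∏ j ∈ Finset.univ.filter (fun j : Fin d => ¬ (j : ℕ) < kbar), N j = 1 := by
      refine Finset.prod_eq_one (fun j hj => ?_)
      rw [hNdef]; dsimp only
      rw [if_neg (Finset.mem_filter.1 hj).2]
    rw [h1, h2, mul_one]
  set e : Fin (𝒩 ^ kbar) ≃ (∀ j, Fin (N j)) := (Fintype.equivFinOfCardEq hcardI).symm with he
  set P : (∀ j, Fin (N j)) → EuclideanSpace ℝ (Fin d) :=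
    fun c => (EuclideanSpace.equiv (Fin d) ℝ).symm (fun j => q j (c j)) with hP
  refine ⟨fun i => P (e i), ?_⟩
  refine Real.sSup_le ?_ (le_of_lt hε)
  rintro r ⟨ξ, hξ, rfl⟩
  set π : Measure (Fin d → ℝ) := Measure.pi μ with hπ
  have htoEucCont : Continuous ((EuclideanSpace.equiv (Fin d) ℝ).symm :
      (Fin d → ℝ) → EuclideanSpace ℝ (Fin d)) := (EuclideanSpace.equiv (Fin d) ℝ).symm.continuous
  -- cells
  set cells : (∀ j, Fin (N j)) → Set (Fin d → ℝ) :=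
    fun c => univ.pi (fun j => W1Aux.qcell (q j) (N j) ((c j : ℕ))) with hcells
  have hcellmeas : ∀ c, MeasurableSet (cells c) :=
    fun c => MeasurableSet.univ_pi (fun j => W1Aux.measurableSet_qcell (hqmono j) (c j).2)
  have hcellmem : ∀ (x : Fin d → ℝ) c, x ∈ cells c ↔
      ∀ j, W1Aux.qidx (q j) (N j) (x j) = ((c j : ℕ)) := by
    intro x c
    rw [hcells]
    simp only [mem_pi, mem_univ, forall_true_left]
    rfl
  set κ : (Fin d → ℝ) → (∀ j, Fin (N j)) :=
    fun x j => ⟨W1Aux.qidx (q j) (N j) (x j), W1Aux.qidx_lt (hN1 j)⟩ with hκ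
  have hmemκ : ∀ x, x ∈ cells (κ x) := fun x => (hcellmem x _).2 (fun j => rfl)
  have hκunique : ∀ x c, x ∈ cells c → κ x = c :=
    fun x c h => funext fun j => Fin.ext ((hcellmem x c).1 h j)
  have hΨrepr : ∀ x : Fin d → ℝ, ξ (P (κ x)) =
      ∑ c : (∀ j, Fin (N j)), (cells c).indicator (fun _ => ξ (P c)) x := by
    intro x
    rw [Finset.sum_eq_single_of_mem (κ x) (Finset.mem_univ _)]
    · rw [Set.indicator_of_mem (hmemκ x)]
    · intro c _ hc
      exact Set.indicator_of_notMem (fun h => hc (hκunique x c h).symm) _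
  have hmeasπcell : ∀ c, (π (cells c)).toReal = ((𝒩 : ℝ) ^ kbar)⁻¹ := by
    intro c
    rw [hcells]; dsimp only
    rw [hπ, Measure.pi_pi, ENNReal.toReal_prod,
      Finset.prod_congr rfl
        (fun j _ => W1Aux.meas_qcell (μ j) (hqmono j) (hN1 j) (hIic j) (c j).2)]
    simp only [one_div]
    exact hprodN
  -- a.e. support
  have hgood : ∀ᵐ x ∂π, ∀ j, x j ∈ Icc (a j) (b j) := by
    rw [MeasureTheory.ae_all_iff]
    intro j
    rw [ae_iff]
    exact Measure.pi_eval_preimage_null _ (hsupp j)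
  -- integrability of Φ
  have hΦcont : Continuous (fun x : Fin d → ℝ => ξ ((EuclideanSpace.equiv (Fin d) ℝ).symm x)) :=
    hξ.continuous.comp htoEucCont
  have habs_le : ∀ (u v : EuclideanSpace ℝ (Fin d)), |ξ u - ξ v| ≤ ‖u - v‖ := by
    intro u v
    have h1 := hξ.dist_le_mul u v
    rw [NNReal.coe_one, one_mul, Real.dist_eq, dist_eq_norm] at h1
    exact h1
  have hΦint : Integrable (fun x : Fin d → ℝ => ξ ((EuclideanSpace.equiv (Fin d) ℝ).symm x)) π := by
    refine (integrable_const (|ξ ((EuclideanSpace.equiv (Fin d) ℝ).symm 0)|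
      + ∑ j, (|a j| + |b j|))).mono' hΦcont.aestronglyMeasurable ?_
    filter_upwards [hgood] with x hx
    rw [Real.norm_eq_abs]
    have h1 : |ξ ((EuclideanSpace.equiv (Fin d) ℝ).symm x)|
        ≤ |ξ ((EuclideanSpace.equiv (Fin d) ℝ).symm 0)|
          + ‖(EuclideanSpace.equiv (Fin d) ℝ).symm x
            - (EuclideanSpace.equiv (Fin d) ℝ).symm 0‖ := by
      have := habs_le ((EuclideanSpace.equiv (Fin d) ℝ).symm x)
        ((EuclideanSpace.equiv (Fin d) ℝ).symm 0)
      calc |ξ ((EuclideanSpace.equiv (Fin d) ℝ).symm x)|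
          ≤ |ξ ((EuclideanSpace.equiv (Fin d) ℝ).symm 0)|
            + |ξ ((EuclideanSpace.equiv (Fin d) ℝ).symm x)
              - ξ ((EuclideanSpace.equiv (Fin d) ℝ).symm 0)| := by
            have h5 := abs_sub_abs_le_abs_sub (ξ ((EuclideanSpace.equiv (Fin d) ℝ).symm x))
              (ξ ((EuclideanSpace.equiv (Fin d) ℝ).symm 0))
            linarith
        _ ≤ _ := by gcongr
    have h2 : (EuclideanSpace.equiv (Fin d) ℝ).symm x - (EuclideanSpace.equiv (Fin d) ℝ).symm 0
        = (EuclideanSpace.equiv (Fin d) ℝ).symm (x - 0) := (map_sub _ _ _).symm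
    have h3 : ‖(EuclideanSpace.equiv (Fin d) ℝ).symm (x - 0)‖ ≤ ∑ j, |x j| := by
      refine le_trans (W1Aux.norm_toEuc_le _) ?_
      simp
    have h4 : ∑ j, |x j| ≤ ∑ j, (|a j| + |b j|) := by
      refine Finset.sum_le_sum (fun j _ => ?_)
      obtain ⟨hl, hr⟩ := hx j
      rw [abs_le]
      constructor
      · have := neg_abs_le (a j)
        have := abs_nonneg (b j)
        linarith
      · have := le_abs_self (b j)
        have := abs_nonneg (a j)
        linarith
    rw [h2] at h1
    linarith
  -- integrability and value of Ψ
  have hΨint : Integrable (fun x : Fin d → ℝ => ξ (P (κ x))) π := by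
    rw [show (fun x : Fin d → ℝ => ξ (P (κ x)))
        = fun x => ∑ c : (∀ j, Fin (N j)), (cells c).indicator (fun _ => ξ (P c)) x from
        funext hΨrepr]
    exact integrable_finset_sum _ (fun c _ => (integrable_const _).indicator (hcellmeas c))
  have hΨval : ∫ x, ξ (P (κ x)) ∂π
      = ((𝒩 : ℝ) ^ kbar)⁻¹ * ∑ c : (∀ j, Fin (N j)), ξ (P c) := by
    rw [show (fun x : Fin d → ℝ => ξ (P (κ x)))
        = fun x => ∑ c : (∀ j, Fin (N j)), (cells c).indicator (fun _ => ξ (P c)) x from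
        funext hΨrepr]
    rw [integral_finset_sum _ (fun c _ => (integrable_const _).indicator (hcellmeas c)),
      Finset.mul_sum]
    refine Finset.sum_congr rfl (fun c _ => ?_)
    rw [integral_indicator_const _ (hcellmeas c), measureReal_def, hmeasπcell c, smul_eq_mul]
  -- the ν-side integral
  have hν : ∫ z, ξ z ∂(((𝒩 : ENNReal) ^ kbar)⁻¹ • ∑ i : Fin (𝒩 ^ kbar),
      Measure.dirac (P (e i)))
      = ((𝒩 : ℝ) ^ kbar)⁻¹ * ∑ c : (∀ j, Fin (N j)), ξ (P c) := by
    rw [integral_smul_measure]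
    rw [integral_finset_sum_measure (fun i _ => ?_)]
    · simp only [integral_dirac]
      rw [show ∑ i : Fin (𝒩 ^ kbar), ξ (P (e i)) = ∑ c : (∀ j, Fin (N j)), ξ (P c) from
        Equiv.sum_comp e (fun c => ξ (P c))]
      rw [smul_eq_mul]
      congr 1
      rw [ENNReal.toReal_inv]
      norm_num
    · exact (integrable_const (ξ (P (e i)))).congr (by
        rw [ae_dirac_eq]; exact Filter.eventually_pure.2 rfl)
  -- the μ-side integral
  have hμside : ∫ z, ξ z ∂(π.map ((EuclideanSpace.equiv (Fin d) ℝ).symm :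
        (Fin d → ℝ) → EuclideanSpace ℝ (Fin d)))
      = ∫ x, ξ ((EuclideanSpace.equiv (Fin d) ℝ).symm x) ∂π :=
    integral_map htoEucCont.measurable.aemeasurable hξ.continuous.aestronglyMeasurable
  -- the G function
  set Gf : (Fin d → ℝ) → ℝ := fun x => ∑ j, ∑ i ∈ Finset.range (N j),
    ((W1Aux.qcell (q j) (N j) i).indicator (fun _ => q j (i + 1) - q j i) (x j)) with hG
  have hGrw : ∀ (j : Fin d) (i : ℕ),
      (fun x : Fin d → ℝ =>
        (W1Aux.qcell (q j) (N j) i).indicator (fun _ => q j (i + 1) - q j i) (x j))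
      = (Function.eval j ⁻¹' (W1Aux.qcell (q j) (N j) i)).indicator
          (fun _ => q j (i + 1) - q j i) := by
    intro j i
    funext x
    by_cases h : x j ∈ W1Aux.qcell (q j) (N j) i
    · rw [Set.indicator_of_mem h, Set.indicator_of_mem (by exact h)]
    · rw [Set.indicator_of_notMem h, Set.indicator_of_notMem (by exact h)]
  have hGint : Integrable Gf π := by
    rw [hG]
    refine integrable_finset_sum _ (fun j _ => integrable_finset_sum _ (fun i hi => ?_))
    rw [hGrw]
    exact (integrable_const _).indicator
      (measurable_pi_apply j (W1Aux.measurableSet_qcell (hqmono j) (Finset.mem_range.1 hi)))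
  have hGval : ∫ x, Gf x ∂π = ∑ j, σ j / N j := by
    rw [hG]
    rw [integral_finset_sum _ (fun j _ => integrable_finset_sum _ (fun i hi => by
      rw [hGrw]
      exact (integrable_const _).indicator
        (measurable_pi_apply j (W1Aux.measurableSet_qcell (hqmono j) (Finset.mem_range.1 hi)))))]
    refine Finset.sum_congr rfl (fun j _ => ?_)
    rw [integral_finset_sum _ (fun i hi => by
      rw [hGrw]
      exact (integrable_const _).indicator
        (measurable_pi_apply j (W1Aux.measurableSet_qcell (hqmono j) (Finset.mem_range.1 hi))))]
    have hterm : ∀ i ∈ Finset.range (N j),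
        ∫ x, (W1Aux.qcell (q j) (N j) i).indicator (fun _ => q j (i + 1) - q j i) (x j) ∂π
        = (q j (i + 1) - q j i) * (1 / (N j : ℝ)) := by
      intro i hi
      rw [show (fun x : Fin d → ℝ =>
          (W1Aux.qcell (q j) (N j) i).indicator (fun _ => q j (i + 1) - q j i) (x j))
          = (Function.eval j ⁻¹' (W1Aux.qcell (q j) (N j) i)).indicator
            (fun _ => q j (i + 1) - q j i) from hGrw j i]
      rw [integral_indicator_const _
        (measurable_pi_apply j (W1Aux.measurableSet_qcell (hqmono j) (Finset.mem_range.1 hi)))]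
      rw [measureReal_def, hπ, show (fun f : Fin d → ℝ => f j) ⁻¹' W1Aux.qcell (q j) (N j) i
          = Function.eval j ⁻¹' W1Aux.qcell (q j) (N j) i from rfl, W1Aux.pi_preimage_eval μ j,
        W1Aux.meas_qcell (μ j) (hqmono j) (hN1 j) (hIic j) (Finset.mem_range.1 hi)]
      rw [smul_eq_mul, mul_comm]
    rw [Finset.sum_congr rfl hterm, ← Finset.sum_mul, Finset.sum_range_sub (fun i => q j i),
      hqN j, hq0 j, ← hσdef j]
    rw [mul_one_div]
  -- pointwise bound
  have hGbound : ∀ᵐ x ∂π,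
      |ξ ((EuclideanSpace.equiv (Fin d) ℝ).symm x) - ξ (P (κ x))| ≤ Gf x := by
    filter_upwards [hgood] with x hx
    have hstep1 : |ξ ((EuclideanSpace.equiv (Fin d) ℝ).symm x) - ξ (P (κ x))|
        ≤ ‖(EuclideanSpace.equiv (Fin d) ℝ).symm x - P (κ x)‖ := habs_le _ _
    have hstep2 : (EuclideanSpace.equiv (Fin d) ℝ).symm x - P (κ x)
        = (EuclideanSpace.equiv (Fin d) ℝ).symm
            (fun j => x j - q j (W1Aux.qidx (q j) (N j) (x j))) := by
      rw [hP]; dsimp only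
      rw [← map_sub]
      rfl
    have hstep3 : ‖(EuclideanSpace.equiv (Fin d) ℝ).symm
        (fun j => x j - q j (W1Aux.qidx (q j) (N j) (x j)))‖
        ≤ ∑ j, |x j - q j (W1Aux.qidx (q j) (N j) (x j))| := W1Aux.norm_toEuc_le _
    have hstep4 : ∑ j, |x j - q j (W1Aux.qidx (q j) (N j) (x j))| ≤ Gf x := by
      rw [hG]
      refine Finset.sum_le_sum (fun j _ => ?_)
      have hin : ∑ i ∈ Finset.range (N j),
          (W1Aux.qcell (q j) (N j) i).indicator (fun _ => q j (i + 1) - q j i) (x j)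
          = q j (W1Aux.qidx (q j) (N j) (x j) + 1) - q j (W1Aux.qidx (q j) (N j) (x j)) := by
        rw [Finset.sum_eq_single_of_mem (W1Aux.qidx (q j) (N j) (x j))
          (Finset.mem_range.2 (W1Aux.qidx_lt (hN1 j)))]
        · rw [Set.indicator_of_mem W1Aux.mem_qcell_qidx]
        · intro i _ hne
          exact Set.indicator_of_notMem
            (s := W1Aux.qcell (q j) (N j) i) (fun h => hne (Eq.symm h)) _
      rw [hin]
      have hl : q j (W1Aux.qidx (q j) (N j) (x j)) ≤ x j :=
        W1Aux.q_qidx_le (hqmono j) (by rw [hq0 j]; exact (hx j).1)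
      have hr : x j ≤ q j (W1Aux.qidx (q j) (N j) (x j) + 1) :=
        W1Aux.le_q_qidx_succ (hqmono j) (hN1 j) (by rw [hqN j]; exact (hx j).2)
      rw [abs_of_nonneg (by linarith)]
      linarith
    calc |ξ ((EuclideanSpace.equiv (Fin d) ℝ).symm x) - ξ (P (κ x))|
        ≤ ‖(EuclideanSpace.equiv (Fin d) ℝ).symm x - P (κ x)‖ := hstep1
      _ = ‖(EuclideanSpace.equiv (Fin d) ℝ).symm
            (fun j => x j - q j (W1Aux.qidx (q j) (N j) (x j)))‖ := by rw [hstep2]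
      _ ≤ ∑ j, |x j - q j (W1Aux.qidx (q j) (N j) (x j))| := hstep3
      _ ≤ Gf x := hstep4
  -- final arithmetic bound
  have harith : ∑ j, σ j / N j ≤ ε := by
    rw [← Finset.sum_filter_add_sum_filter_not Finset.univ
      (fun j : Fin d => (j : ℕ) < kbar) (fun j => σ j / N j)]
    have h1 : ∑ j ∈ Finset.univ.filter (fun j : Fin d => (j : ℕ) < kbar), σ j / N j ≤ ε / 2 := by
      have heq : ∀ j ∈ Finset.univ.filter (fun j : Fin d => (j : ℕ) < kbar),
          σ j / N j = σ j / 𝒩 := by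
        intro j hj
        rw [hNdef]; dsimp only
        rw [if_pos (Finset.mem_filter.1 hj).2]
      rw [Finset.sum_congr rfl heq, ← Finset.sum_div]
      calc (∑ j ∈ Finset.univ.filter (fun j : Fin d => (j : ℕ) < kbar), σ j) / 𝒩
          = (1 / (𝒩 : ℝ)) * ∑ j ∈ Finset.univ.filter (fun j : Fin d => (j : ℕ) < kbar), σ j := by
            rw [one_div, inv_mul_eq_div]
        _ ≤ ε / 2 := h𝒩
    have h2 : ∑ j ∈ Finset.univ.filter (fun j : Fin d => ¬ (j : ℕ) < kbar), σ j / N j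
        ≤ ε / 2 := by
      have heq : ∀ j ∈ Finset.univ.filter (fun j : Fin d => ¬ (j : ℕ) < kbar),
          σ j / N j = σ j := by
        intro j hj
        rw [hNdef]; dsimp only
        rw [if_neg (Finset.mem_filter.1 hj).2]
        norm_num
      rw [Finset.sum_congr rfl heq]
      have hfil : Finset.univ.filter (fun j : Fin d => ¬ (j : ℕ) < kbar)
          = Finset.univ.filter (fun j : Fin d => kbar ≤ (j : ℕ)) := by
        ext j; simp [not_lt]
      rw [hfil]
      exact htail
    linarith
  -- assemble
  rw [hμside, hν, ← hΨval, ← integral_sub hΦint hΨint]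
  calc |∫ x, (ξ ((EuclideanSpace.equiv (Fin d) ℝ).symm x) - ξ (P (κ x))) ∂π|
      ≤ ∫ x, |ξ ((EuclideanSpace.equiv (Fin d) ℝ).symm x) - ξ (P (κ x))| ∂π := by
        simpa [Real.norm_eq_abs] using norm_integral_le_integral_norm (μ := π)
          (fun x => ξ ((EuclideanSpace.equiv (Fin d) ℝ).symm x) - ξ (P (κ x)))
    _ ≤ ∫ x, Gf x ∂π := integral_mono_of_nonneg
        (Filter.Eventually.of_forall (fun x => abs_nonneg _)) hGint hGbound
    _ = ∑ j, σ j / N j := hGval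
    _ ≤ ε := harith

end
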